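/- If π is a Borel probability measure on ℝ × ℝ^d × ℝ with finite second moment N(π) = ∫ (a² + |w|² + b²) dπ, then the realization f_π(x) = ∫ a·max(wᵀx+b,0) dπ(a,w,b) is well-defined and Lipschitz continuous on ℝ^d with Lipschitz constant at most N(π). -/

import Mathlib

open MeasureTheory

/-- If `π` is a Borel probability measure on `ℝ × ℝ^d × ℝ` with finite second
moment `N(π) = ∫ (a² + |w|² + b²) dπ`, then the realization
`f_π(x) = ∫ a·max(wᵀx+b,0) dπ` is well-defined (the integrand is integrable for
every `x`) and Lipschitz continuous with Lipschitz constant at most `N(π)`. -/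
theorem realization_lipschitz (d : ℕ)
    (π : Measure (ℝ × EuclideanSpace ℝ (Fin d) × ℝ)) [IsProbabilityMeasure π]
    (hmom : Integrable (fun θ : ℝ × EuclideanSpace ℝ (Fin d) × ℝ =>
      θ.1 ^ 2 + ‖θ.2.1‖ ^ 2 + θ.2.2 ^ 2) π) :
    (∀ x : EuclideanSpace ℝ (Fin d),
      Integrable (fun θ : ℝ × EuclideanSpace ℝ (Fin d) × ℝ =>
        θ.1 * max (inner ℝ θ.2.1 x + θ.2.2) 0) π) ∧
    LipschitzWith (Real.toNNReal (∫ θ, (θ.1 ^ 2 + ‖θ.2.1‖ ^ 2 + θ.2.2 ^ 2) ∂π))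
      (fun x : EuclideanSpace ℝ (Fin d) =>
        ∫ θ, θ.1 * max (inner ℝ θ.2.1 x + θ.2.2) 0 ∂π) := by
  set M : ℝ × EuclideanSpace ℝ (Fin d) × ℝ → ℝ :=
    fun θ => θ.1 ^ 2 + ‖θ.2.1‖ ^ 2 + θ.2.2 ^ 2 with hMdef
  have hMnn : ∀ θ, 0 ≤ M θ := fun θ => by positivity
  -- the key moment bound: |a|‖w‖ ≤ M and |a||b| ≤ M
  have haw : ∀ θ : ℝ × EuclideanSpace ℝ (Fin d) × ℝ, |θ.1| * ‖θ.2.1‖ ≤ M θ := by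
    intro θ
    simp only [hMdef]
    nlinarith [sq_nonneg (|θ.1| - ‖θ.2.1‖), sq_abs θ.1, sq_nonneg θ.2.2]
  have hab : ∀ θ : ℝ × EuclideanSpace ℝ (Fin d) × ℝ, |θ.1| * |θ.2.2| ≤ M θ := by
    intro θ
    simp only [hMdef]
    nlinarith [sq_nonneg (|θ.1| - |θ.2.2|), sq_abs θ.1, sq_abs θ.2.2, norm_nonneg θ.2.1]
  have hcont : ∀ x : EuclideanSpace ℝ (Fin d),
      Continuous fun θ : ℝ × EuclideanSpace ℝ (Fin d) × ℝ =>
        θ.1 * max (inner ℝ θ.2.1 x + θ.2.2) 0 := by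
    intro x
    exact continuous_fst.mul
      (((continuous_snd.fst.inner continuous_const).add continuous_snd.snd).max
        continuous_const)
  have key : ∀ (x : EuclideanSpace ℝ (Fin d)) θ,
      ‖θ.1 * max ((inner ℝ θ.2.1 x : ℝ) + θ.2.2) 0‖ ≤ (‖x‖ + 1) * M θ := by
    intro x θ
    have h1 : |(inner ℝ θ.2.1 x : ℝ)| ≤ ‖θ.2.1‖ * ‖x‖ := abs_real_inner_le_norm _ _
    have h2 : |max ((inner ℝ θ.2.1 x : ℝ) + θ.2.2) 0| ≤ |(inner ℝ θ.2.1 x : ℝ)| + |θ.2.2| := by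
      calc |max ((inner ℝ θ.2.1 x : ℝ) + θ.2.2) 0| ≤ |(inner ℝ θ.2.1 x : ℝ) + θ.2.2| := by
            rcases le_total ((inner ℝ θ.2.1 x : ℝ) + θ.2.2) 0 with h | h
            · rw [max_eq_right h, abs_zero]; exact abs_nonneg _
            · rw [max_eq_left h]
        _ ≤ _ := abs_add_le _ _
    rw [Real.norm_eq_abs, abs_mul]
    have h3 : |θ.1| * |max ((inner ℝ θ.2.1 x : ℝ) + θ.2.2) 0|
        ≤ |θ.1| * (‖θ.2.1‖ * ‖x‖ + |θ.2.2|) := by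
      apply mul_le_mul_of_nonneg_left _ (abs_nonneg _)
      exact h2.trans (by linarith)
    refine h3.trans ?_
    have := haw θ
    have := hab θ
    have hx : (0:ℝ) ≤ ‖x‖ := norm_nonneg x
    nlinarith [abs_nonneg θ.1, norm_nonneg θ.2.1, mul_nonneg (mul_nonneg (abs_nonneg θ.1) (norm_nonneg θ.2.1)) hx]
  have hint : ∀ x : EuclideanSpace ℝ (Fin d),
      Integrable (fun θ : ℝ × EuclideanSpace ℝ (Fin d) × ℝ =>
        θ.1 * max (inner ℝ θ.2.1 x + θ.2.2) 0) π := by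
    intro x
    refine (hmom.const_mul (‖x‖ + 1)).mono (hcont x).aestronglyMeasurable
      (ae_of_all _ fun θ => ?_)
    refine (key x θ).trans ?_
    rw [Real.norm_eq_abs]
    exact le_abs_self _
  refine ⟨hint, ?_⟩
  have hN0 : 0 ≤ ∫ θ, M θ ∂π := integral_nonneg hMnn
  apply LipschitzWith.of_dist_le_mul
  intro x y
  rw [Real.coe_toNNReal _ hN0, dist_eq_norm, ← integral_sub (hint x) (hint y)]
  have hbound : ∀ θ : ℝ × EuclideanSpace ℝ (Fin d) × ℝ,
      ‖θ.1 * max ((inner ℝ θ.2.1 x : ℝ) + θ.2.2) 0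
        - θ.1 * max ((inner ℝ θ.2.1 y : ℝ) + θ.2.2) 0‖ ≤ M θ * dist x y := by
    intro θ
    rw [Real.norm_eq_abs, ← mul_sub, abs_mul]
    have h1 : |max ((inner ℝ θ.2.1 x : ℝ) + θ.2.2) 0 - max ((inner ℝ θ.2.1 y : ℝ) + θ.2.2) 0|
        ≤ |((inner ℝ θ.2.1 x : ℝ) + θ.2.2) - ((inner ℝ θ.2.1 y : ℝ) + θ.2.2)| :=
      abs_max_sub_max_le_abs _ _ _
    have h2 : ((inner ℝ θ.2.1 x : ℝ) + θ.2.2) - ((inner ℝ θ.2.1 y : ℝ) + θ.2.2)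
        = (inner ℝ θ.2.1 (x - y) : ℝ) := by rw [inner_sub_right]; ring
    have h3 : |(inner ℝ θ.2.1 (x - y) : ℝ)| ≤ ‖θ.2.1‖ * ‖x - y‖ := abs_real_inner_le_norm _ _
    rw [h2] at h1
    calc |θ.1| * |max ((inner ℝ θ.2.1 x : ℝ) + θ.2.2) 0 - max ((inner ℝ θ.2.1 y : ℝ) + θ.2.2) 0|
        ≤ |θ.1| * (‖θ.2.1‖ * ‖x - y‖) :=
          mul_le_mul_of_nonneg_left (h1.trans h3) (abs_nonneg _)
      _ = |θ.1| * ‖θ.2.1‖ * ‖x - y‖ := by ring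
      _ ≤ M θ * ‖x - y‖ := mul_le_mul_of_nonneg_right (haw θ) (norm_nonneg _)
      _ = M θ * dist x y := by rw [dist_eq_norm]
  calc ‖∫ θ, (θ.1 * max ((inner ℝ θ.2.1 x : ℝ) + θ.2.2) 0
          - θ.1 * max ((inner ℝ θ.2.1 y : ℝ) + θ.2.2) 0) ∂π‖
      ≤ ∫ θ, ‖θ.1 * max ((inner ℝ θ.2.1 x : ℝ) + θ.2.2) 0
          - θ.1 * max ((inner ℝ θ.2.1 y : ℝ) + θ.2.2) 0‖ ∂π :=
        norm_integral_le_integral_norm _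
    _ ≤ ∫ θ, M θ * dist x y ∂π := by
        refine integral_mono ((hint x).sub (hint y)).norm (hmom.mul_const _)
          fun θ => hbound θ
    _ = (∫ θ, M θ ∂π) * dist x y := integral_mul_const _ _
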